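/- Let Γ(μ) be a differentiable family of k×k real matrices and define B(μ) = [[Γ(μ), Γ'(μ)],[0, Γ(μ)]] where Γ'(μ) = dΓ/dμ. Then the (1,2)-block of exp(B(μ)) equals the derivative d/dμ exp(Γ(μ)) of the matrix exponential. -/

import Mathlib

open Matrix


open Matrix Finset NormedSpace

namespace ExpBlockAux

section BlockPow
variable {R : Type*} [Ring R] {k : ℕ}

lemma fromBlocks_pow (A E : Matrix (Fin k) (Fin k) R) (n : ℕ) :
    (Matrix.fromBlocks A E 0 A) ^ n =
      Matrix.fromBlocks (A ^ n) (∑ i ∈ Finset.range n, A ^ i * E * A ^ (n - 1 - i)) 0 (A ^ n) := by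
  induction n with
  | zero => simp [Matrix.fromBlocks_one]
  | succ n ih =>
      have h12 : A ^ n * E + (∑ i ∈ Finset.range n, A ^ i * E * A ^ (n - 1 - i)) * A
          = ∑ i ∈ Finset.range (n + 1), A ^ i * E * A ^ (n + 1 - 1 - i) := by
        rw [Finset.sum_range_succ, Finset.sum_mul]
        have h : ∀ i ∈ Finset.range n, A ^ i * E * A ^ (n - 1 - i) * A
            = A ^ i * E * A ^ (n + 1 - 1 - i) := by
          intro i hi
          rw [Finset.mem_range] at hi
          rw [mul_assoc (A ^ i * E), ← pow_succ]
          congr 2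
          omega
        rw [Finset.sum_congr rfl h, add_comm]
        congr 1
        simp
      rw [pow_succ, ih, Matrix.fromBlocks_multiply, ← pow_succ, h12]
      simp
end BlockPow

lemma summable_aux (b : ℝ) (hb : 0 ≤ b) :
    Summable fun n : ℕ => (n.factorial : ℝ)⁻¹ * ((n : ℝ) ^ 2 * b ^ n) := by
  refine Summable.of_nonneg_of_le (fun n => by positivity)
    (fun n => ?_) (Real.summable_pow_div_factorial (4 * b))
  have h2 : (n : ℝ) ≤ 2 ^ n := by exact_mod_cast (Nat.lt_two_pow_self (n := n)).le
  have h1 : ((n : ℝ)) ^ 2 ≤ (4 : ℝ) ^ n := by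
    calc ((n:ℝ))^2 ≤ ((2:ℝ)^n)^2 := pow_le_pow_left₀ (by positivity) h2 2
      _ = (4:ℝ)^n := by rw [← pow_mul, mul_comm n 2, pow_mul]; norm_num
  have h3 : (n:ℝ)^2 * b^n ≤ (4*b)^n := by
    rw [mul_pow]
    gcongr
  calc (n.factorial : ℝ)⁻¹ * ((n : ℝ) ^ 2 * b ^ n)
      ≤ (n.factorial : ℝ)⁻¹ * (4*b)^n := by
        have := Nat.factorial_pos n
        gcongr
    _ = (4*b)^n / n.factorial := by ring

section Analytic

attribute [local instance] Matrix.linftyOpNormedRing Matrix.linftyOpNormedAlgebra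

variable {k : ℕ} [Nonempty (Fin k)]

noncomputable def L (A E : Matrix (Fin k) (Fin k) ℝ) (n : ℕ) : Matrix (Fin k) (Fin k) ℝ :=
  ∑ i ∈ Finset.range n, A ^ i * E * A ^ (n - 1 - i)

lemma L_succ (A E : Matrix (Fin k) (Fin k) ℝ) (n : ℕ) :
    L A E (n + 1) = L A E n * A + A ^ n * E := by
  have h : ∀ i ∈ Finset.range n, A ^ i * E * A ^ (n - 1 - i) * A
      = A ^ i * E * A ^ (n + 1 - 1 - i) := by
    intro i hi
    rw [Finset.mem_range] at hi
    rw [mul_assoc (A ^ i * E), ← pow_succ]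
    congr 2
    omega
  rw [L, L, Finset.sum_range_succ, Finset.sum_mul, Finset.sum_congr rfl h]
  congr 1
  simp

lemma norm_L_le (A E : Matrix (Fin k) (Fin k) ℝ) (n : ℕ) :
    ‖L A E n‖ ≤ n * ((‖A‖ + 1) ^ n * ‖E‖) := by
  have hA0 : (0:ℝ) ≤ ‖A‖ := norm_nonneg A
  have hA1 : (1 : ℝ) ≤ ‖A‖ + 1 := by linarith
  have key : ∀ i ∈ Finset.range n, ‖A ^ i * E * A ^ (n - 1 - i)‖ ≤ (‖A‖ + 1) ^ n * ‖E‖ := by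
    intro i hi
    rw [Finset.mem_range] at hi
    have h1 : ‖A ^ i * E * A ^ (n - 1 - i)‖ ≤ ‖A‖ ^ i * ‖E‖ * ‖A‖ ^ (n - 1 - i) := by
      calc ‖A ^ i * E * A ^ (n - 1 - i)‖ ≤ ‖A ^ i * E‖ * ‖A ^ (n - 1 - i)‖ := norm_mul_le _ _
        _ ≤ ‖A ^ i‖ * ‖E‖ * ‖A ^ (n - 1 - i)‖ := by
            gcongr; exact norm_mul_le _ _
        _ ≤ ‖A‖ ^ i * ‖E‖ * ‖A‖ ^ (n - 1 - i) := by
            gcongr <;> exact norm_pow_le _ _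
    refine h1.trans ?_
    calc ‖A‖ ^ i * ‖E‖ * ‖A‖ ^ (n - 1 - i)
        ≤ (‖A‖ + 1) ^ i * ‖E‖ * (‖A‖ + 1) ^ (n - 1 - i) := by
          gcongr <;> linarith
      _ = (‖A‖ + 1) ^ (i + (n - 1 - i)) * ‖E‖ := by rw [pow_add]; ring
      _ ≤ (‖A‖ + 1) ^ n * ‖E‖ := by
          gcongr
          · omega
  calc ‖L A E n‖ ≤ ∑ i ∈ Finset.range n, ‖A ^ i * E * A ^ (n - 1 - i)‖ := norm_sum_le _ _
    _ ≤ ∑ _i ∈ Finset.range n, (‖A‖ + 1) ^ n * ‖E‖ := Finset.sum_le_sum key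
    _ = n * ((‖A‖ + 1) ^ n * ‖E‖) := by
        rw [Finset.sum_const, Finset.card_range, nsmul_eq_mul]





lemma norm_R_le (A E : Matrix (Fin k) (Fin k) ℝ) (hE : ‖E‖ ≤ 1) (n : ℕ) :
    ‖(A + E) ^ n - A ^ n - L A E n‖ ≤ (n : ℝ) ^ 2 * (‖A‖ + 1) ^ n * ‖E‖ ^ 2 := by
  induction n with
  | zero => simp [L]
  | succ n ih =>
      have hb1 : (1:ℝ) ≤ ‖A‖ + 1 := by linarith [norm_nonneg A]
      have hAE : ‖A + E‖ ≤ ‖A‖ + 1 := (norm_add_le A E).trans (by linarith)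
      have hiden : (A + E) ^ (n+1) - A ^ (n+1) - L A E (n+1)
          = ((A + E) ^ n - A ^ n - L A E n) * (A + E) + L A E n * E := by
        rw [pow_succ, pow_succ, L_succ]
        noncomm_ring
      rw [hiden]
      push_cast
      have h1 : ‖((A + E) ^ n - A ^ n - L A E n) * (A + E)‖
          ≤ ((n : ℝ) ^ 2 * (‖A‖ + 1) ^ n * ‖E‖ ^ 2) * (‖A‖ + 1) := by
        calc ‖((A + E) ^ n - A ^ n - L A E n) * (A + E)‖
            ≤ ‖(A + E) ^ n - A ^ n - L A E n‖ * ‖A + E‖ := norm_mul_le _ _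
          _ ≤ ((n : ℝ) ^ 2 * (‖A‖ + 1) ^ n * ‖E‖ ^ 2) * (‖A‖ + 1) := by gcongr
      have h2 : ‖L A E n * E‖ ≤ ((n:ℝ) * ((‖A‖ + 1) ^ n * ‖E‖)) * ‖E‖ := by
        calc ‖L A E n * E‖ ≤ ‖L A E n‖ * ‖E‖ := norm_mul_le _ _
          _ ≤ ((n:ℝ) * ((‖A‖ + 1) ^ n * ‖E‖)) * ‖E‖ := by
              gcongr
              exact norm_L_le A E n
      calc ‖((A + E) ^ n - A ^ n - L A E n) * (A + E) + L A E n * E‖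
          ≤ ‖((A + E) ^ n - A ^ n - L A E n) * (A + E)‖ + ‖L A E n * E‖ := norm_add_le _ _
        _ ≤ ((n : ℝ) ^ 2 * (‖A‖ + 1) ^ n * ‖E‖ ^ 2) * (‖A‖ + 1)
            + ((n:ℝ) * ((‖A‖ + 1) ^ n * ‖E‖)) * ‖E‖ := add_le_add h1 h2
        _ = ((n:ℝ)^2*(‖A‖+1) + (n:ℝ)) * ((‖A‖+1)^n * ‖E‖^2) := by ring
        _ ≤ (((n:ℝ)+1)^2*(‖A‖+1)) * ((‖A‖+1)^n * ‖E‖^2) := by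
            have hE0 : (0:ℝ) ≤ ‖E‖ := norm_nonneg E
            have hn : (0:ℝ) ≤ (n:ℝ) := n.cast_nonneg
            have hs : (n:ℝ)^2*(‖A‖+1) + (n:ℝ) ≤ ((n:ℝ)+1)^2*(‖A‖+1) := by nlinarith
            gcongr
        _ = ((n : ℝ) + 1) ^ 2 * (‖A‖ + 1) ^ (n+1) * ‖E‖ ^ 2 := by rw [pow_succ]; ring

lemma summable_smul_L (A E : Matrix (Fin k) (Fin k) ℝ) :
    Summable fun n : ℕ => (n.factorial : ℝ)⁻¹ • L A E n := by
  apply Summable.of_norm_bounded ((summable_aux (‖A‖ + 1) (by positivity)).mul_right ‖E‖)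
  intro n
  rw [norm_smul, Real.norm_of_nonneg (by positivity)]
  have h1 : ‖L A E n‖ ≤ (n:ℝ) * ((‖A‖ + 1) ^ n * ‖E‖) := norm_L_le A E n
  have h2 : (n:ℝ) ≤ (n:ℝ)^2 := by exact_mod_cast Nat.le_self_pow two_ne_zero n
  calc (n.factorial : ℝ)⁻¹ * ‖L A E n‖
      ≤ (n.factorial : ℝ)⁻¹ * ((n:ℝ)^2 * ((‖A‖ + 1) ^ n * ‖E‖)) := by
        refine mul_le_mul_of_nonneg_left (h1.trans ?_) (by positivity)
        have : (0:ℝ) ≤ (‖A‖ + 1) ^ n * ‖E‖ := by positivity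
        nlinarith
    _ = (n.factorial : ℝ)⁻¹ * ((n:ℝ)^2 * (‖A‖ + 1) ^ n) * ‖E‖ := by ring

noncomputable def Slin (A : Matrix (Fin k) (Fin k) ℝ) :
    Matrix (Fin k) (Fin k) ℝ →ₗ[ℝ] Matrix (Fin k) (Fin k) ℝ where
  toFun E := ∑' n : ℕ, (n.factorial : ℝ)⁻¹ • L A E n
  map_add' E F := by
    have hL : ∀ n, L A (E + F) n = L A E n + L A F n := by
      intro n; simp [L, mul_add, add_mul, Finset.sum_add_distrib]
    simp_rw [hL, smul_add]
    exact Summable.tsum_add (summable_smul_L A E) (summable_smul_L A F)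
  map_smul' c E := by
    have hL : ∀ n, L A (c • E) n = c • L A E n := by
      intro n; simp [L, Finset.smul_sum, mul_smul_comm, smul_mul_assoc]
    simp_rw [hL, smul_comm _ c]
    simpa using Summable.tsum_const_smul c (summable_smul_L A E)

noncomputable def Sclm (A : Matrix (Fin k) (Fin k) ℝ) :
    Matrix (Fin k) (Fin k) ℝ →L[ℝ] Matrix (Fin k) (Fin k) ℝ :=
  (Slin A).toContinuousLinearMap

lemma Sclm_apply (A E : Matrix (Fin k) (Fin k) ℝ) :
    Sclm A E = ∑' n : ℕ, (n.factorial : ℝ)⁻¹ • L A E n := rfl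

lemma key_bound (A E : Matrix (Fin k) (Fin k) ℝ) (hE : ‖E‖ ≤ 1) :
    ‖exp (A + E) - exp A - Sclm A E‖
      ≤ (∑' n : ℕ, (n.factorial : ℝ)⁻¹ * ((n:ℝ)^2 * (‖A‖+1)^n)) * ‖E‖^2 := by
  have hsum1 := NormedSpace.expSeries_summable' (𝕂 := ℝ) (A + E)
  have hsum2 := NormedSpace.expSeries_summable' (𝕂 := ℝ) A
  have hsum3 := summable_smul_L A E
  have hterm : ∀ n : ℕ, (n.factorial : ℝ)⁻¹ • (A+E)^n - (n.factorial : ℝ)⁻¹ • A^n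
      - (n.factorial : ℝ)⁻¹ • L A E n
      = (n.factorial : ℝ)⁻¹ • ((A+E)^n - A^n - L A E n) := by
    intro n; rw [smul_sub, smul_sub]
  have hbound : ∀ n : ℕ, ‖(n.factorial : ℝ)⁻¹ • ((A+E)^n - A^n - L A E n)‖
      ≤ (n.factorial : ℝ)⁻¹ * ((n:ℝ)^2 * (‖A‖+1)^n) * ‖E‖^2 := by
    intro n
    rw [norm_smul, Real.norm_of_nonneg (by positivity)]
    calc (n.factorial : ℝ)⁻¹ * ‖(A+E)^n - A^n - L A E n‖
        ≤ (n.factorial : ℝ)⁻¹ * ((n:ℝ)^2 * (‖A‖+1)^n * ‖E‖^2) :=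
          mul_le_mul_of_nonneg_left (norm_R_le A E hE n) (by positivity)
      _ = (n.factorial : ℝ)⁻¹ * ((n:ℝ)^2 * (‖A‖+1)^n) * ‖E‖^2 := by ring
  have husum : Summable fun n : ℕ =>
      (n.factorial : ℝ)⁻¹ * ((n:ℝ)^2 * (‖A‖+1)^n) * ‖E‖^2 :=
    (summable_aux (‖A‖+1) (by positivity)).mul_right _
  have hnormsum : Summable fun n : ℕ =>
      ‖(n.factorial : ℝ)⁻¹ • ((A+E)^n - A^n - L A E n)‖ :=
    Summable.of_nonneg_of_le (fun n => norm_nonneg _) hbound husum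
  simp only [NormedSpace.exp_eq_tsum (𝕂 := ℝ)]
  erw [Sclm_apply, ← Summable.tsum_sub hsum1 hsum2, ← Summable.tsum_sub (hsum1.sub hsum2) hsum3]
  simp_rw [hterm]
  calc ‖∑' n : ℕ, (n.factorial : ℝ)⁻¹ • ((A+E)^n - A^n - L A E n)‖
      ≤ ∑' n : ℕ, ‖(n.factorial : ℝ)⁻¹ • ((A+E)^n - A^n - L A E n)‖ :=
        norm_tsum_le_tsum_norm hnormsum
    _ ≤ ∑' n : ℕ, (n.factorial : ℝ)⁻¹ * ((n:ℝ)^2 * (‖A‖+1)^n) * ‖E‖^2 :=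
        Summable.tsum_le_tsum hbound hnormsum husum
    _ = (∑' n : ℕ, (n.factorial : ℝ)⁻¹ * ((n:ℝ)^2 * (‖A‖+1)^n)) * ‖E‖^2 :=
        tsum_mul_right

lemma hasFDerivAt_exp_mat (A : Matrix (Fin k) (Fin k) ℝ) :
    HasFDerivAt (exp) (Sclm A) A := by
  refine hasFDerivAt_iff_isLittleO_nhds_zero.2 ?_
  set C := ∑' n : ℕ, (n.factorial : ℝ)⁻¹ * ((n:ℝ)^2 * (‖A‖+1)^n) with hC
  refine Asymptotics.IsBigO.trans_isLittleO (Asymptotics.isBigO_iff.2 ⟨C, ?_⟩)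
    (Asymptotics.isLittleO_norm_pow_id one_lt_two)
  have hev : ∀ᶠ h : Matrix (Fin k) (Fin k) ℝ in nhds 0, ‖h‖ ≤ 1 := by
    filter_upwards [Metric.ball_mem_nhds (0 : Matrix (Fin k) (Fin k) ℝ) one_pos] with h hh
    rw [Metric.mem_ball, dist_zero_right] at hh
    exact hh.le
  filter_upwards [hev] with h hh
  have hk := key_bound A h hh
  calc ‖exp (A + h) - exp A - Sclm A h‖ ≤ C * ‖h‖^2 := hk
    _ = C * ‖‖h‖^2‖ := by rw [Real.norm_of_nonneg (by positivity)]

lemma matrix_rep (X : Matrix (Fin k) (Fin k) ℝ) :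
    X = ∑ i, ∑ j, X i j • Matrix.single i j (1:ℝ) := by
  conv_lhs => rw [Matrix.matrix_eq_sum_single X]
  simp [Matrix.smul_single]

lemma main_aux {k : ℕ} [Nonempty (Fin k)] (Γ : ℝ → Matrix (Fin k) (Fin k) ℝ)
    (hΓ : ∀ i j, Differentiable ℝ (fun μ => Γ μ i j)) (μ : ℝ) :
    (NormedSpace.exp (Matrix.fromBlocks (Γ μ)
        (Matrix.of fun i j => deriv (fun t => Γ t i j) μ) 0 (Γ μ))).toBlocks₁₂ =
      Matrix.of fun i j => deriv (fun t => NormedSpace.exp (Γ t) i j) μ := by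
  set A : Matrix (Fin k) (Fin k) ℝ := Γ μ with hA
  set E : Matrix (Fin k) (Fin k) ℝ := Matrix.of fun i j => deriv (fun t => Γ t i j) μ with hE
  -- derivative of Γ as a matrix-valued function
  have hDΓ : HasDerivAt Γ E μ := by
    have h1 : HasDerivAt (fun t => ∑ i, ∑ j, Γ t i j • Matrix.single i j (1:ℝ))
        (∑ i, ∑ j, deriv (fun t => Γ t i j) μ • Matrix.single i j (1:ℝ)) μ := by
      apply HasDerivAt.fun_sum
      intro i _
      apply HasDerivAt.fun_sum
      intro j _
      exact ((hΓ i j) μ).hasDerivAt.smul_const _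
    have h2 : (fun t => ∑ i, ∑ j, Γ t i j • Matrix.single i j (1:ℝ)) = Γ := by
      funext t
      exact (matrix_rep (Γ t)).symm
    rw [h2] at h1
    convert h1 using 1
    exact matrix_rep E
  have hD : HasDerivAt (fun t => exp (Γ t)) (Sclm A E) μ :=
    (hasFDerivAt_exp_mat A).comp_hasDerivAt μ hDΓ
  have hentry : ∀ i j, deriv (fun t => exp (Γ t) i j) μ = Sclm A E i j := by
    intro i j
    let eCLM : Matrix (Fin k) (Fin k) ℝ →L[ℝ] ℝ :=
      LinearMap.toContinuousLinearMap
        { toFun := fun X => X i j, map_add' := fun _ _ => rfl, map_smul' := fun _ _ => rfl }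
    exact (eCLM.hasFDerivAt.comp_hasDerivAt μ hD).deriv
  have hblock : (exp (Matrix.fromBlocks A E 0 A)).toBlocks₁₂
      = ∑' n : ℕ, (n.factorial : ℝ)⁻¹ • L A E n := by
    let bCLM : Matrix (Fin k ⊕ Fin k) (Fin k ⊕ Fin k) ℝ →L[ℝ] Matrix (Fin k) (Fin k) ℝ :=
      LinearMap.toContinuousLinearMap
        { toFun := Matrix.toBlocks₁₂, map_add' := fun _ _ => rfl, map_smul' := fun _ _ => rfl }
    have hsum := NormedSpace.expSeries_summable' (𝕂 := ℝ) (Matrix.fromBlocks A E 0 A)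
    have h1 : (exp (Matrix.fromBlocks A E 0 A)).toBlocks₁₂
        = bCLM (exp (Matrix.fromBlocks A E 0 A)) := rfl
    rw [h1]
    simp only [NormedSpace.exp_eq_tsum (𝕂 := ℝ)]
    rw [bCLM.map_tsum hsum]
    congr 1
    funext n
    rw [_root_.map_smul]
    congr 1
    show (Matrix.fromBlocks A E 0 A ^ n).toBlocks₁₂ = L A E n
    rw [fromBlocks_pow, Matrix.toBlocks_fromBlocks₁₂]
    rfl
  rw [hblock, ← Sclm_apply]
  ext i j
  rw [Matrix.of_apply, hentry i j]

end Analytic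

end ExpBlockAux


/-- The `(1,2)` block of `exp [[Γ(μ), Γ'(μ)],[0, Γ(μ)]]`, where `Γ'` is the derivative of a
differentiable family `Γ`, equals the derivative of `μ ↦ exp (Γ μ)`. -/
theorem exp_block_derivative (k : ℕ) (Γ : ℝ → Matrix (Fin k) (Fin k) ℝ)
    (hΓ : ∀ i j, Differentiable ℝ (fun μ => Γ μ i j)) (μ : ℝ) :
    (NormedSpace.exp (Matrix.fromBlocks (Γ μ)
        (Matrix.of fun i j => deriv (fun t => Γ t i j) μ) 0 (Γ μ))).toBlocks₁₂ =
      Matrix.of fun i j => deriv (fun t => NormedSpace.exp (Γ t) i j) μ := by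
  rcases Nat.eq_zero_or_pos k with hk | hk
  · subst hk
    apply Matrix.ext
    intro i
    exact Fin.elim0 i
  · haveI : Nonempty (Fin k) := ⟨⟨0, hk⟩⟩
    exact ExpBlockAux.main_aux Γ hΓ μ
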